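/- Let (A, m) be a Noetherian local ring, let M be a finitely generated A-module, and let I ⊆ J be ideals of A. Assume: (a) there exists n ≥ 1 such that I • (Jⁿ • M) = J^{n+1} • M; and (b) there exist i₀ and j₀ such that mⁱ • (J • (Iʲ • M)) ⊆ I^{j+1} • M for all i ≥ i₀ and all j ≥ j₀. Then there exist positive integers k and l such that mᵏ • (Jʲ • M) ⊆ Iʲ • M for all j ≥ l; in particular, λ(JʲM/IʲM) is finite for all j ≥ l. (Core deduction in the proof of Proposition 4.1.) -/

import Mathlib

open Order IsLocalRing

/-- The length of a module, i.e. the Krull dimension of its submodule lattice,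
as an element of `ℕ∞`. -/
noncomputable def moduleLength (A M : Type*) [CommRing A] [AddCommGroup M] [Module A M] : ℕ∞ :=
  WithBot.unbotD 0 (Order.krullDim (Submodule A M))

/-- `lenQuot L K` is the length `λ(K/L)` of the subquotient `K/L` of `M`,
realized as the image of `K` in `M ⧸ L`. -/
noncomputable def lenQuot {A M : Type*} [CommRing A] [AddCommGroup M] [Module A M]
    (L K : Submodule A M) : ℕ∞ :=
  moduleLength A ↥(K.map L.mkQ)

section Aux

lemma auxHeightSucc {γ : Type*} [Preorder γ] {x y : γ} (h : x < y) :
    height x + 1 ≤ height y := by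
  rw [height_eq_iSup_lt_height y]
  exact le_iSup₂_of_le x h le_rfl

lemma auxProdLen {α β : Type*} [Preorder α] [Preorder β] (p : LTSeries (α × β)) :
    (p.length : ℕ∞) ≤ height p.last.1 + height p.last.2 := by
  obtain ⟨n, hn⟩ : ∃ n, p.length = n := ⟨_, rfl⟩
  induction n generalizing p with
  | zero => simp [hn]
  | succ n ih =>
      have hne : p.length ≠ 0 := by omega
      have hlt : p.eraseLast.last < p.last := p.eraseLast_last_rel_last hne
      have hlen : p.eraseLast.length = n := by simp [RelSeries.eraseLast, hn]
      have ih' := ih p.eraseLast hlen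
      rw [hlen] at ih'
      have key : height p.eraseLast.last.1 + height p.eraseLast.last.2 + 1
          ≤ height p.last.1 + height p.last.2 := by
        rcases Prod.lt_iff.mp hlt with ⟨h1, h2⟩ | ⟨h1, h2⟩
        · calc height p.eraseLast.last.1 + height p.eraseLast.last.2 + 1
              = (height p.eraseLast.last.1 + 1) + height p.eraseLast.last.2 := by ring
            _ ≤ height p.last.1 + height p.last.2 :=
                add_le_add (auxHeightSucc h1) (height_mono h2)
        · calc height p.eraseLast.last.1 + height p.eraseLast.last.2 + 1
              = height p.eraseLast.last.1 + (height p.eraseLast.last.2 + 1) := by ring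
            _ ≤ height p.last.1 + height p.last.2 :=
                add_le_add (height_mono h1) (auxHeightSucc h2)
      rw [hn]
      push_cast
      calc (n : ℕ∞) + 1 ≤ height p.eraseLast.last.1 + height p.eraseLast.last.2 + 1 :=
            add_le_add_left ih' 1
        _ ≤ _ := key

lemma auxKrullDimProd {α β : Type*} [Preorder α] [Preorder β] [OrderTop α] [OrderTop β]
    (ha : krullDim α ≠ ⊤) (hb : krullDim β ≠ ⊤) : krullDim (α × β) ≠ ⊤ := by
  have h1 : height (⊤ : α) ≠ ⊤ := by
    intro h; rw [← height_top_eq_krullDim, h] at ha; exact ha rfl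
  have h2 : height (⊤ : β) ≠ ⊤ := by
    intro h; rw [← height_top_eq_krullDim, h] at hb; exact hb rfl
  have hC : (height (⊤ : α) + height (⊤ : β) : ℕ∞) ≠ ⊤ := by
    intro hc; rcases WithTop.add_eq_top.mp hc with h' | h'
    exacts [h1 h', h2 h']
  have hle : krullDim (α × β) ≤ ((height (⊤ : α) + height (⊤ : β) : ℕ∞) : WithBot ℕ∞) := by
    refine iSup_le fun p => ?_
    have := (auxProdLen p).trans (add_le_add (height_mono le_top) (height_mono le_top))
    exact_mod_cast this
  intro h
  rw [h] at hle
  exact hC (by exact_mod_cast top_le_iff.mp hle)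

lemma auxSimpleKrull {γ : Type*} [Lattice γ] [BoundedOrder γ] [IsSimpleOrder γ] :
    krullDim γ ≠ ⊤ := by
  have h1 : krullDim γ ≤ ((1 : ℕ) : WithBot ℕ∞) := by
    refine iSup_le fun p => ?_
    by_contra hc
    push_neg at hc
    have h2 : 2 ≤ p.length := by
      by_contra h
      interval_cases hl : p.length <;> simp_all <;> exact hc.not_ge (by norm_num)
    have h01 : p ⟨0, by omega⟩ < p ⟨1, by omega⟩ := p.strictMono (by simp [Fin.lt_def])
    have h12 : p ⟨1, by omega⟩ < p ⟨2, by omega⟩ := p.strictMono (by simp [Fin.lt_def])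
    rcases IsSimpleOrder.eq_bot_or_eq_top (p ⟨1, by omega⟩) with h | h
    · exact absurd (h ▸ h01) (by simp)
    · exact absurd (h ▸ h12) (by simp)
  intro h
  rw [h, top_le_iff] at h1
  exact absurd h1 (by
    intro hc
    have : ((1:ℕ) : WithBot ℕ∞) ≠ ⊤ := by simp [← WithBot.coe_top]
    exact this hc)

theorem auxStrictMonoPair {R M : Type*} [Ring R] [AddCommGroup M] [Module R M]
    (N : Submodule R M) :
    StrictMono (fun P : Submodule R M =>
      ((P.comap N.subtype, P.map N.mkQ) : Submodule R ↥N × Submodule R (M ⧸ N))) := by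
  intro P Q hPQ
  refine lt_of_le_of_ne ⟨Submodule.comap_mono hPQ.le, Submodule.map_mono hPQ.le⟩ ?_
  intro heq
  have h1 : P.comap N.subtype = Q.comap N.subtype := congrArg Prod.fst heq
  have h2 : P.map N.mkQ = Q.map N.mkQ := congrArg Prod.snd heq
  refine hPQ.ne ?_
  refine le_antisymm hPQ.le fun x hxQ => ?_
  have : N.mkQ x ∈ P.map N.mkQ := h2 ▸ Submodule.mem_map_of_mem hxQ
  obtain ⟨y, hyP, hyx⟩ := this
  have hmem : x - y ∈ N := by
    rw [← Submodule.ker_mkQ N, LinearMap.mem_ker, map_sub, hyx, sub_self]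
  have : (⟨x - y, hmem⟩ : ↥N) ∈ Q.comap N.subtype := by
    simpa using Q.sub_mem hxQ (hPQ.le hyP)
  rw [← h1] at this
  have hxyP : x - y ∈ P := this
  simpa using P.add_mem hxyP hyP

lemma auxFinKrull {R : Type*} [Ring R] {M : Type u} [AddCommGroup M] [Module R M]
    (h : IsFiniteLength R M) : krullDim (Submodule R M) ≠ ⊤ := by
  induction h with
  | of_subsingleton =>
      rename_i M' _ _ _
      haveI : Subsingleton (Submodule R M') := by
        constructor
        intro P Q
        ext x
        have hx : x = 0 := Subsingleton.elim x 0
        simp [hx]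
      have h0 := krullDim_nonpos_of_subsingleton (α := Submodule R M')
      intro hc
      rw [hc, top_le_iff, ← WithBot.coe_zero, ← WithBot.coe_top, WithBot.coe_inj] at h0
      simp at h0
  | of_simple_quotient hfl ih =>
      rename_i M' _ _ N _
      have hsm := auxStrictMonoPair N
      have hle := krullDim_le_of_strictMono _ hsm
      have hprod : krullDim (Submodule R ↥N × Submodule R (M' ⧸ N)) ≠ ⊤ :=
        auxKrullDimProd ih auxSimpleKrull
      exact ne_top_of_le_ne_top hprod hle

lemma auxModuleLengthLtTop {A M : Type*} [CommRing A] [AddCommGroup M] [Module A M]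
    (h : IsFiniteLength A M) : moduleLength A M < ⊤ := by
  have hne := auxFinKrull h
  rw [moduleLength, lt_top_iff_ne_top]
  rcases hk : krullDim (Submodule A M) with _ | y
  · show ¬ (0 : ℕ∞) = ⊤
    simp
  · have hy : y ≠ ⊤ := by
      intro hy
      exact hne (by rw [hk, hy]; rfl)
    show ¬ (y : ℕ∞) = ⊤
    simpa using hy

lemma auxArtinianOfTorsion {A : Type*} {M : Type*} [CommRing A]
    [AddCommGroup M] [Module A M] (I : Ideal A)
    (htor : Module.IsTorsionBySet A M I)
    (hart : letI := htor.module; IsArtinian (A ⧸ I) M) : IsArtinian A M := by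
  letI := htor.module
  rw [← monotone_stabilizes_iff_artinian]
  intro f
  let g : Submodule A M → Submodule (A ⧸ I) M := fun P =>
    { carrier := P
      add_mem' := fun h1 h2 => P.add_mem h1 h2
      zero_mem' := P.zero_mem
      smul_mem' := by
        rintro ⟨b⟩ x hx
        show (Ideal.Quotient.mk I b) • x ∈ P
        rw [htor.mk_smul]
        exact P.smul_mem b hx }
  have hg : ∀ P Q : Submodule A M, g P ≤ g Q ↔ P ≤ Q := fun P Q => Iff.rfl
  have := monotone_stabilizes_iff_artinian.mpr hart
  obtain ⟨n, hn⟩ := this ⟨fun m => OrderDual.toDual (g (OrderDual.ofDual (f m))),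
    fun a b hab => (hg _ _).mpr (f.monotone hab)⟩
  refine ⟨n, fun m hm => ?_⟩
  have h2 : g (OrderDual.ofDual (f n)) = g (OrderDual.ofDual (f m)) := hn m hm
  have h3 : OrderDual.ofDual (f n) = OrderDual.ofDual (f m) :=
    SetLike.ext fun x => SetLike.ext_iff.mp h2 x
  exact congrArg OrderDual.toDual h3

lemma auxVSArtinian {A : Type*} {M : Type*} [CommRing A] [IsLocalRing A]
    [AddCommGroup M] [Module A M] [IsNoetherian A M]
    (h : (maximalIdeal A) • (⊤ : Submodule A M) = ⊥) : IsArtinian A M := by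
  have htor : Module.IsTorsionBySet A M (maximalIdeal A) := by
    intro x a
    have : (a : A) • x ∈ (maximalIdeal A) • (⊤ : Submodule A M) :=
      Submodule.smul_mem_smul a.2 Submodule.mem_top
    rwa [h, Submodule.mem_bot] at this
  letI := htor.module
  haveI : IsScalarTower A (A ⧸ maximalIdeal A) M := htor.isScalarTower
  letI : Field (A ⧸ maximalIdeal A) := Ideal.Quotient.field _
  haveI : IsNoetherian (A ⧸ maximalIdeal A) M := isNoetherian_of_tower A inferInstance
  haveI : Module.Finite (A ⧸ maximalIdeal A) M := Module.Finite.of_restrictScalars_finite A _ _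
  haveI : IsArtinian (A ⧸ maximalIdeal A) M := inferInstance
  exact auxArtinianOfTorsion _ htor this

lemma auxPowArtinian {A : Type*} [CommRing A] [IsLocalRing A] (k : ℕ) :
    ∀ {M : Type u} [AddCommGroup M] [Module A M] [IsNoetherian A M],
      (maximalIdeal A) ^ k • (⊤ : Submodule A M) = ⊥ → IsArtinian A M := by
  induction k with
  | zero =>
      intro M _ _ _ h
      rw [pow_zero, one_smul] at h
      haveI : Subsingleton M := by
        refine subsingleton_of_forall_eq 0 fun x => ?_
        have : x ∈ (⊥ : Submodule A M) := h ▸ Submodule.mem_top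
        simpa using this
      infer_instance
  | succ k ih =>
      intro M _ _ _ h
      set S := (maximalIdeal A) ^ k • (⊤ : Submodule A M) with hSdef
      have hS : (maximalIdeal A) • (⊤ : Submodule A ↥S) = ⊥ := by
        have hmap : Submodule.map S.subtype ((maximalIdeal A) • (⊤ : Submodule A ↥S)) = ⊥ := by
          rw [Submodule.map_smul'', Submodule.map_top, Submodule.range_subtype, hSdef,
            ← mul_smul, ← pow_succ']
          exact h
        have hinj := Submodule.map_injective_of_injective (Submodule.injective_subtype S)
        apply hinj
        rw [hmap, Submodule.map_bot]
      haveI hart1 : IsArtinian A ↥S := auxVSArtinian hS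
      have hQ : (maximalIdeal A) ^ k • (⊤ : Submodule A (M ⧸ S)) = ⊥ := by
        have htop : (⊤ : Submodule A (M ⧸ S)) = Submodule.map S.mkQ ⊤ := by
          rw [Submodule.map_top, Submodule.range_mkQ]
        rw [htop, ← Submodule.map_smul'']
        have : (maximalIdeal A) ^ k • (⊤ : Submodule A M) ≤ LinearMap.ker S.mkQ := by
          rw [Submodule.ker_mkQ]
        rw [← le_bot_iff]
        intro x hx
        obtain ⟨y, hy, rfl⟩ := hx
        have : S.mkQ y = 0 := by
          rw [← LinearMap.mem_ker, Submodule.ker_mkQ]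
          exact hy
        simp [this]
      haveI hart2 : IsArtinian A (M ⧸ S) := ih hQ
      exact (isArtinian_iff_submodule_quotient S).mpr ⟨hart1, hart2⟩

lemma auxSmulComm {A : Type*} [CommRing A] {M : Type*} [AddCommGroup M] [Module A M]
    (I J : Ideal A) (N : Submodule A M) : I • (J • N) = J • (I • N) := by
  rw [← mul_smul, mul_comm, mul_smul]

end Aux

/-- Core deduction in the proof of Proposition 4.1: if `I` is a reduction of `(J, M)`
and `𝔪ⁱ J IʲM ⊆ I^{j+1}M` for all `i ≥ i₀`, `j ≥ j₀`, then there are positive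
integers `k, l` with `𝔪ᵏ JʲM ⊆ IʲM` for all `j ≥ l`; in particular `λ(JʲM/IʲM)`
is finite for `j ≥ l`. -/
theorem stmt_3 {A M : Type*} [CommRing A] [IsLocalRing A] [IsNoetherianRing A]
    [AddCommGroup M] [Module A M] [Module.Finite A M]
    (I J : Ideal A) (hIJ : I ≤ J)
    (ha : ∃ n ≥ 1, I • (J ^ n • (⊤ : Submodule A M)) = J ^ (n + 1) • (⊤ : Submodule A M))
    (hb : ∃ i₀ j₀ : ℕ, ∀ i ≥ i₀, ∀ j ≥ j₀,
      (IsLocalRing.maximalIdeal A) ^ i • (J • (I ^ j • (⊤ : Submodule A M)))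
        ≤ I ^ (j + 1) • (⊤ : Submodule A M)) :
    ∃ k l : ℕ, 0 < k ∧ 0 < l ∧ ∀ j ≥ l,
      (IsLocalRing.maximalIdeal A) ^ k • (J ^ j • (⊤ : Submodule A M))
          ≤ I ^ j • (⊤ : Submodule A M) ∧
        lenQuot (I ^ j • (⊤ : Submodule A M)) (J ^ j • (⊤ : Submodule A M)) < ⊤ := by
  obtain ⟨n, hn1, han⟩ := ha
  obtain ⟨i₀, j₀, hbb⟩ := hb
  set 𝔪 := IsLocalRing.maximalIdeal A
  -- Step 1: J^(n+m) M = I^m J^n M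
  have step1 : ∀ m : ℕ, J ^ (n + m) • (⊤ : Submodule A M) = I ^ m • (J ^ n • (⊤ : Submodule A M)) := by
    intro m
    induction m with
    | zero => simp
    | succ m ih =>
        calc J ^ (n + (m + 1)) • (⊤ : Submodule A M)
            = (J * J ^ (n + m)) • (⊤ : Submodule A M) := by rw [← pow_succ', ← Nat.add_assoc]
          _ = J • (J ^ (n + m) • (⊤ : Submodule A M)) := mul_smul _ _ _
          _ = J • (I ^ m • (J ^ n • (⊤ : Submodule A M))) := by rw [ih]
          _ = I ^ m • (J • (J ^ n • (⊤ : Submodule A M))) := auxSmulComm _ _ _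
          _ = I ^ m • ((J * J ^ n) • (⊤ : Submodule A M)) := by rw [mul_smul]
          _ = I ^ m • (J ^ (n + 1) • (⊤ : Submodule A M)) := by rw [← pow_succ']
          _ = I ^ m • (I • (J ^ n • (⊤ : Submodule A M))) := by rw [han]
          _ = (I ^ m * I) • (J ^ n • (⊤ : Submodule A M)) := (mul_smul _ _ _).symm
          _ = I ^ (m + 1) • (J ^ n • (⊤ : Submodule A M)) := by rw [← pow_succ]
  -- Step 2
  have step2 : ∀ s : ℕ, ∀ j ≥ j₀,
      𝔪 ^ (i₀ * s) • (J ^ s • (I ^ j • (⊤ : Submodule A M))) ≤ I ^ (j + s) • (⊤ : Submodule A M) := by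
    intro s
    induction s with
    | zero => intro j hj; simp
    | succ s ih =>
        intro j hj
        have hcalc : 𝔪 ^ (i₀ * (s + 1)) • (J ^ (s + 1) • (I ^ j • (⊤ : Submodule A M)))
            = 𝔪 ^ (i₀ * s) • (J ^ s • (𝔪 ^ i₀ • (J • (I ^ j • (⊤ : Submodule A M))))) := by
          rw [Nat.mul_succ, pow_add, mul_smul, pow_succ, mul_smul]
          rw [auxSmulComm (𝔪 ^ i₀) (J ^ s), auxSmulComm (𝔪 ^ i₀) J]
        rw [hcalc]
        calc 𝔪 ^ (i₀ * s) • (J ^ s • (𝔪 ^ i₀ • (J • (I ^ j • (⊤ : Submodule A M)))))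
            ≤ 𝔪 ^ (i₀ * s) • (J ^ s • (I ^ (j + 1) • (⊤ : Submodule A M))) := by
              refine Submodule.smul_mono le_rfl (Submodule.smul_mono le_rfl ?_)
              exact hbb i₀ le_rfl j hj
          _ ≤ I ^ (j + 1 + s) • (⊤ : Submodule A M) := ih (j + 1) (le_trans hj (by omega))
          _ = I ^ (j + (s + 1)) • (⊤ : Submodule A M) := by rw [show j + 1 + s = j + (s + 1) by omega]
  refine ⟨i₀ * n + 1, n + j₀ + 1, by omega, by omega, fun j hj => ?_⟩
  obtain ⟨m, hm, hjm⟩ : ∃ m, m ≥ j₀ ∧ j = n + m := ⟨j - n, by omega, by omega⟩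
  have main : 𝔪 ^ (i₀ * n + 1) • (J ^ j • (⊤ : Submodule A M)) ≤ I ^ j • (⊤ : Submodule A M) := by
    calc 𝔪 ^ (i₀ * n + 1) • (J ^ j • (⊤ : Submodule A M))
        = 𝔪 ^ (i₀ * n) • (𝔪 • (J ^ j • (⊤ : Submodule A M))) := by rw [pow_succ, mul_smul]
      _ ≤ 𝔪 ^ (i₀ * n) • (J ^ j • (⊤ : Submodule A M)) :=
          Submodule.smul_mono le_rfl Submodule.smul_le_right
      _ = 𝔪 ^ (i₀ * n) • (J ^ n • (I ^ m • (⊤ : Submodule A M))) := by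
          rw [hjm, step1 m, auxSmulComm (I ^ m) (J ^ n)]
      _ ≤ I ^ (m + n) • (⊤ : Submodule A M) := step2 n m hm
      _ = I ^ j • (⊤ : Submodule A M) := by rw [hjm, Nat.add_comm]
  refine ⟨main, ?_⟩
  haveI : IsNoetherian A M := inferInstance
  set T := (J ^ j • (⊤ : Submodule A M)).map (I ^ j • (⊤ : Submodule A M)).mkQ with hT
  haveI : IsNoetherian A ↥T := inferInstance
  have hann : 𝔪 ^ (i₀ * n + 1) • (⊤ : Submodule A ↥T) = ⊥ := by
    rw [← le_bot_iff]
    rw [Submodule.smul_le]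
    rintro r hr t -
    rw [Submodule.mem_bot]
    have ht : (t : M ⧸ (I ^ j • (⊤ : Submodule A M))) ∈ T := t.2
    obtain ⟨y, hy, hyt⟩ := ht
    have hry : r • y ∈ I ^ j • (⊤ : Submodule A M) :=
      main (Submodule.smul_mem_smul hr hy)
    have : (r • t : ↥T) = r • t := rfl
    refine Subtype.ext ?_
    show r • (t : M ⧸ (I ^ j • (⊤ : Submodule A M))) = 0
    rw [← hyt, ← map_smul]
    rw [show (I ^ j • (⊤ : Submodule A M)).mkQ (r • y) = Submodule.Quotient.mk (r • y) from rfl]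
    rwa [Submodule.Quotient.mk_eq_zero]
  haveI hartT : IsArtinian A ↥T := auxPowArtinian (i₀ * n + 1) hann
  have hfl : IsFiniteLength A ↥T :=
    (isFiniteLength_iff_isNoetherian_isArtinian).mpr ⟨inferInstance, hartT⟩
  exact auxModuleLengthLtTop hfl
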